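/- Let A = [[0, I], [−L, −I]] with L symmetric, L·𝟏 = 0 with distinct eigenvalues and a row i of its eigenvector matrix having all entries nonzero, and let C output velocities (C·(x,v) = (c₁v₁,…,cₘvₘ), cᵢ ≠ 0). Then ker O(A, C) = span{(𝟏ₙ, 0ₙ)}, i.e., the unobservable subspace is exactly the one-dimensional space of uniform position translations. -/

import Mathlib

open Matrix Polynomial

section Aux

variable {n : ℕ}

lemma sum_mulVec' {ι : Type*} (s : Finset ι) (M : ι → Matrix (Fin n ⊕ Fin n) (Fin n ⊕ Fin n) ℝ)
    (v : Fin n ⊕ Fin n → ℝ) :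
    (∑ k ∈ s, M k).mulVec v = ∑ k ∈ s, (M k).mulVec v := by
  classical
  induction s using Finset.induction with
  | empty => simp [Matrix.zero_mulVec]
  | insert _ _ h ih => simp [Finset.sum_insert h, Matrix.add_mulVec, ih]

lemma conj_diag_mul (Q : Matrix (Fin n) (Fin n) ℝ) (hQ' : Qᵀ * Q = 1) (d e : Fin n → ℝ) :
    (Q * Matrix.diagonal d * Qᵀ) * (Q * Matrix.diagonal e * Qᵀ) =
      Q * Matrix.diagonal (fun t => d t * e t) * Qᵀ := by
  have h1 : Q * Matrix.diagonal d * Qᵀ * (Q * Matrix.diagonal e * Qᵀ) =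
      Q * Matrix.diagonal d * (Qᵀ * Q) * (Matrix.diagonal e * Qᵀ) := by noncomm_ring
  rw [h1, hQ', Matrix.mul_one]
  have h2 : Q * Matrix.diagonal d * (Matrix.diagonal e * Qᵀ) =
      Q * (Matrix.diagonal d * Matrix.diagonal e) * Qᵀ := by noncomm_ring
  rw [h2, Matrix.diagonal_mul_diagonal]

lemma smul_one_diag (r : ℝ) :
    r • (1 : Matrix (Fin n) (Fin n) ℝ) = Matrix.diagonal (fun _ => r) := by
  ext a b
  rcases eq_or_ne a b with rfl | hab
  · simp [Matrix.diagonal_apply_eq, Matrix.one_apply_eq]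
  · simp [Matrix.diagonal_apply_ne _ hab, Matrix.one_apply_ne hab]

/-- The key block computation: `aeval A (∏ (X² + X + C λⱼ))` is block-diagonal
with both blocks equal to `Q * diagonal (∏ (λⱼ - λₜ)) * Qᵀ`. -/
lemma aeval_prod_blocks
    (L Q : Matrix (Fin n) (Fin n) ℝ) (hQ : Q * Qᵀ = 1) (hQ' : Qᵀ * Q = 1)
    (lam : Fin n → ℝ) (hspec : L = Q * Matrix.diagonal lam * Qᵀ)
    (A : Matrix (Fin n ⊕ Fin n) (Fin n ⊕ Fin n) ℝ)
    (hA : A = Matrix.fromBlocks 0 1 (-L) (-1))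
    (s : Finset (Fin n)) :
    aeval A (∏ j ∈ s, (X ^ 2 + X + C (lam j))) =
      Matrix.fromBlocks
        (Q * Matrix.diagonal (fun t => ∏ j ∈ s, (lam j - lam t)) * Qᵀ) 0 0
        (Q * Matrix.diagonal (fun t => ∏ j ∈ s, (lam j - lam t)) * Qᵀ) := by
  classical
  induction s using Finset.induction with
  | empty =>
      simp only [Finset.prod_empty, _root_.map_one]
      rw [show (Matrix.diagonal (fun _ : Fin n => (1:ℝ))) = 1 from Matrix.diagonal_one,
        Matrix.mul_one, hQ, Matrix.fromBlocks_one]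
  | insert _ _ h ih =>
      rename_i a s'
      rw [Finset.prod_insert h, _root_.map_mul, ih]
      have hfac : aeval A (X ^ 2 + X + C (lam a)) =
          Matrix.fromBlocks (lam a • 1 - L) 0 0 (lam a • 1 - L) := by
        have h1 : aeval A (X ^ 2 + X + C (lam a)) = A * A + A + lam a • 1 := by
          simp [sq, Algebra.algebraMap_eq_smul_one]
        have hsm : lam a • (1 : Matrix (Fin n ⊕ Fin n) (Fin n ⊕ Fin n) ℝ) =
            Matrix.fromBlocks (lam a • 1) 0 0 (lam a • 1) := by
          rw [← Matrix.fromBlocks_one, Matrix.fromBlocks_smul]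
          simp
        rw [h1, hA, Matrix.fromBlocks_multiply, hsm, Matrix.fromBlocks_add,
          Matrix.fromBlocks_add]
        have e11 : (0 * 0 + 1 * (-L)) + 0 + lam a • 1 = lam a • (1 : Matrix (Fin n) (Fin n) ℝ) - L := by
          rw [Matrix.zero_mul, Matrix.one_mul, zero_add, add_zero]; abel
        have e12 : ((0 : Matrix (Fin n) (Fin n) ℝ) * 1 + 1 * (-1)) + 1 + 0 = 0 := by
          rw [Matrix.zero_mul, Matrix.one_mul, zero_add, add_zero]; abel
        have e21 : ((-L) * 0 + (-1) * (-L)) + (-L) + 0 = (0 : Matrix (Fin n) (Fin n) ℝ) := by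
          rw [Matrix.mul_zero, Matrix.neg_mul, Matrix.one_mul, neg_neg, zero_add, add_zero]; abel
        have e22 : ((-L) * 1 + (-1) * (-1)) + (-1) + lam a • 1 =
            lam a • (1 : Matrix (Fin n) (Fin n) ℝ) - L := by
          rw [Matrix.mul_one, Matrix.neg_mul, Matrix.one_mul, neg_neg]; abel
        rw [e11, e12, e21, e22]
      have hblock : lam a • (1 : Matrix (Fin n) (Fin n) ℝ) - L =
          Q * Matrix.diagonal (fun t => lam a - lam t) * Qᵀ := by
        have hd : Matrix.diagonal (fun t => lam a - lam t) =
            lam a • 1 - Matrix.diagonal lam := by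
          rw [smul_one_diag, ← Matrix.diagonal_sub]
        rw [hd, Matrix.mul_sub, Matrix.sub_mul, hspec]
        congr 1
        rw [Matrix.mul_smul, Matrix.mul_one, Matrix.smul_mul, hQ]
      rw [hfac, hblock, Matrix.fromBlocks_multiply]
      simp only [Matrix.mul_zero, Matrix.zero_mul, add_zero, zero_add]
      rw [conj_diag_mul Q hQ']
      have hfuneq : (fun t => (lam a - lam t) * ∏ j ∈ s', (lam j - lam t)) =
          (fun t => ∏ j ∈ insert a s', (lam j - lam t)) := by
        funext t
        rw [Finset.prod_insert h]
      rw [hfuneq]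

end Aux

/-- With velocity-only outputs and the defense conditions on the Laplacian,
the unobservable subspace of `(A, C)` is exactly the span of `(𝟏, 0)`. -/
theorem velocity_output_kernel_span
    {n m : ℕ} (hm : m ≤ n)
    (L : Matrix (Fin n) (Fin n) ℝ) (hLsym : L.IsSymm)
    (hL1 : L.mulVec (fun _ => 1) = 0)
    (Q : Matrix (Fin n) (Fin n) ℝ) (hQ : Q * Qᵀ = 1)
    (lam : Fin n → ℝ) (hdistinct : Function.Injective lam)
    (hspec : L = Q * Matrix.diagonal lam * Qᵀ)
    (i : Fin n) (hi : (i : ℕ) < m) (hrow : ∀ j, Q i j ≠ 0)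
    (A : Matrix (Fin n ⊕ Fin n) (Fin n ⊕ Fin n) ℝ)
    (hA : A = Matrix.fromBlocks 0 1 (-L) (-1))
    (c : Fin m → ℝ) (hc : ∀ k, c k ≠ 0)
    (C : Matrix (Fin m) (Fin n ⊕ Fin n) ℝ)
    (hC : ∀ k j, C k j = if j = Sum.inr (Fin.castLE hm k) then c k else 0) :
    ∀ w : Fin n ⊕ Fin n → ℝ,
      (∀ k < 2 * n, C.mulVec ((A ^ k).mulVec w) = 0) ↔
      ∃ a : ℝ, w = a • Sum.elim (fun _ => (1 : ℝ)) (fun _ => 0) := by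
  classical
  have hQ' : Qᵀ * Q = 1 := mul_eq_one_comm.mp hQ
  have hn : 0 < n := i.pos
  intro w
  constructor
  · -- forward direction
    intro h
    -- the key component observation
    have hobs : ∀ k < 2 * n, ((A ^ k).mulVec w) (Sum.inr i) = 0 := by
      intro k hk
      have hthis := congrFun (h k hk) ⟨(i : ℕ), hi⟩
      have hcast : Fin.castLE hm (⟨(i : ℕ), hi⟩ : Fin m) = i := by
        ext; rfl
      simp only [Matrix.mulVec, dotProduct, hC, Pi.zero_apply, hcast] at hthis
      rw [Finset.sum_eq_single (Sum.inr i)] at hthis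
      · simp only [if_pos rfl] at hthis
        exact (mul_eq_zero.mp hthis).resolve_left (hc _)
      · intro b _ hb
        rw [if_neg hb]
        exact zero_mul _
      · intro hb; exact absurd (Finset.mem_univ _) hb
    -- extend to polynomials of small degree
    have hpoly : ∀ q : ℝ[X], q.natDegree < 2 * n →
        ((aeval A q).mulVec w) (Sum.inr i) = 0 := by
      intro q hq
      rw [aeval_eq_sum_range' hq, sum_mulVec', Finset.sum_apply]
      apply Finset.sum_eq_zero
      intro k hk
      rw [smul_mulVec]
      simp only [Pi.smul_apply, smul_eq_mul]
      rw [hobs k (Finset.mem_range.mp hk), mul_zero]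
    -- the per-mode polynomial
    set p : Fin n → ℝ[X] :=
      fun l => ∏ j ∈ Finset.univ.erase l, (X ^ 2 + X + Polynomial.C (lam j)) with hp
    have hfacdeg : ∀ j : Fin n, (X ^ 2 + X + Polynomial.C (lam j) : ℝ[X]).natDegree = 2 := by
      intro j
      have := Polynomial.natDegree_quadratic (a := (1:ℝ)) (b := 1) (c := lam j) one_ne_zero
      simpa using this
    have hfacne : ∀ j : Fin n, (X ^ 2 + X + Polynomial.C (lam j) : ℝ[X]) ≠ 0 := by
      intro j hzero
      have h2 := hfacdeg j
      rw [hzero] at h2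
      simp at h2
    have hpne : ∀ l, p l ≠ 0 := by
      intro l
      exact Finset.prod_ne_zero_iff.mpr (fun j _ => hfacne j)
    have hdeg : ∀ l, (p l).natDegree = 2 * (n - 1) := by
      intro l
      rw [hp, Polynomial.natDegree_prod _ _ (fun j _ => hfacne j),
        Finset.sum_congr rfl (fun j _ => hfacdeg j), Finset.sum_const,
        Finset.card_erase_of_mem (Finset.mem_univ l), Finset.card_univ, Fintype.card_fin]
      ring
    set mu : Fin n → Fin n → ℝ :=
      fun l t => ∏ j ∈ Finset.univ.erase l, (lam j - lam t) with hmu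
    -- block form of aeval A (p l)
    have haeval : ∀ l, aeval A (p l) =
        Matrix.fromBlocks (Q * Matrix.diagonal (mu l) * Qᵀ) 0 0
          (Q * Matrix.diagonal (mu l) * Qᵀ) :=
      fun l => aeval_prod_blocks L Q hQ hQ' lam hspec A hA _
    have hmuzero : ∀ l t, t ≠ l → mu l t = 0 := by
      intro l t ht
      exact Finset.prod_eq_zero (Finset.mem_erase.mpr ⟨ht, Finset.mem_univ t⟩) (by ring)
    have hmune : ∀ l, mu l l ≠ 0 := by
      intro l
      apply Finset.prod_ne_zero_iff.mpr
      intro j hj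
      exact sub_ne_zero.mpr fun hh => (Finset.mem_erase.mp hj).1 (hdistinct hh)
    -- component formula for conjugated almost-zero diagonal matrices
    have hcomp : ∀ (l : Fin n) (d : Fin n → ℝ), (∀ t, t ≠ l → d t = 0) →
        ∀ z : Fin n → ℝ,
        ((Q * Matrix.diagonal d * Qᵀ).mulVec z) i = Q i l * (d l * (Qᵀ.mulVec z) l) := by
      intro l d hd z
      have e1 : (Q * Matrix.diagonal d * Qᵀ).mulVec z
          = Q.mulVec ((Matrix.diagonal d).mulVec (Qᵀ.mulVec z)) := by
        rw [Matrix.mulVec_mulVec, Matrix.mulVec_mulVec]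
      rw [e1]
      have e2 : (Q.mulVec ((Matrix.diagonal d).mulVec (Qᵀ.mulVec z))) i =
          ∑ t, Q i t * ((Matrix.diagonal d).mulVec (Qᵀ.mulVec z)) t := rfl
      rw [e2, Finset.sum_eq_single l]
      · rw [Matrix.mulVec_diagonal]
      · intro b _ hb
        rw [Matrix.mulVec_diagonal, hd b hb, zero_mul, mul_zero]
      · intro hb; exact absurd (Finset.mem_univ _) hb
    set x : Fin n → ℝ := fun t => w (Sum.inl t) with hx
    set v : Fin n → ℝ := fun t => w (Sum.inr t) with hvdef
    have hw : w = Sum.elim x v := by funext j; cases j <;> rfl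
    -- step 1 : v = 0
    have hQv : ∀ l, (Qᵀ.mulVec v) l = 0 := by
      intro l
      have hdeg' : (p l).natDegree < 2 * n := by rw [hdeg]; omega
      have h0 := hpoly (p l) hdeg'
      rw [haeval l, hw, Matrix.fromBlocks_mulVec] at h0
      have hcl : Sum.elim x v ∘ Sum.inl = x := rfl
      have hcr : Sum.elim x v ∘ Sum.inr = v := rfl
      rw [hcl, hcr] at h0
      simp only [Sum.elim_inr, Pi.add_apply, Matrix.zero_mulVec, Pi.zero_apply, zero_add] at h0
      rw [hcomp l (mu l) (hmuzero l) v] at h0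
      rcases mul_eq_zero.mp h0 with h' | h'
      · exact absurd h' (hrow l)
      · rcases mul_eq_zero.mp h' with h'' | h''
        · exact absurd h'' (hmune l)
        · exact h''
    have hv : v = 0 := by
      have hz : Qᵀ.mulVec v = 0 := funext hQv
      calc v = (Q * Qᵀ).mulVec v := by rw [hQ, Matrix.one_mulVec]
        _ = Q.mulVec (Qᵀ.mulVec v) := (Matrix.mulVec_mulVec v Q Qᵀ).symm
        _ = Q.mulVec 0 := by rw [hz]
        _ = 0 := Matrix.mulVec_zero _
    -- step 2 : lam l * (Qᵀ x) l = 0 for all l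
    have hQx : ∀ l, lam l * (Qᵀ.mulVec x) l = 0 := by
      intro l
      have hdeg2 : (X * p l).natDegree < 2 * n := by
        rw [Polynomial.natDegree_mul Polynomial.X_ne_zero (hpne l), Polynomial.natDegree_X,
          hdeg]
        omega
      have h1 := hpoly (X * p l) hdeg2
      rw [_root_.map_mul, Polynomial.aeval_X, haeval l, hA, Matrix.fromBlocks_multiply] at h1
      simp only [Matrix.zero_mul, Matrix.one_mul, Matrix.mul_zero, Matrix.neg_mul,
        zero_add, add_zero] at h1
      rw [hw, Matrix.fromBlocks_mulVec] at h1
      have hcl : Sum.elim x v ∘ Sum.inl = x := rfl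
      have hcr : Sum.elim x v ∘ Sum.inr = v := rfl
      rw [hcl, hcr, hv] at h1
      simp only [Sum.elim_inr, Pi.add_apply, Matrix.mulVec_zero, Pi.zero_apply, add_zero,
        Matrix.neg_mulVec, Pi.neg_apply, neg_eq_zero] at h1
      have hLN : L * (Q * Matrix.diagonal (mu l) * Qᵀ) =
          Q * Matrix.diagonal (fun t => lam t * mu l t) * Qᵀ := by
        rw [hspec, conj_diag_mul Q hQ']
      rw [hLN] at h1
      rw [hcomp l (fun t => lam t * mu l t) (fun t ht => show lam t * mu l t = 0 by rw [hmuzero l t ht, mul_zero]) x] at h1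
      rcases mul_eq_zero.mp h1 with h' | h'
      · exact absurd h' (hrow l)
      · rcases mul_eq_zero.mp h' with h'' | h''
        · rcases mul_eq_zero.mp h'' with h3 | h3
          · rw [h3, zero_mul]
          · exact absurd h3 (hmune l)
        · rw [h'', mul_zero]
    -- step 3 : the zero eigenvalue direction
    set u1 : Fin n → ℝ := Qᵀ.mulVec (fun _ => 1) with hu1
    have hDu1 : ∀ s, lam s * u1 s = 0 := by
      have e : (Matrix.diagonal lam).mulVec u1 = 0 := by
        have e1 : Qᵀ * L = Matrix.diagonal lam * Qᵀ := by
          rw [hspec, show Qᵀ * (Q * Matrix.diagonal lam * Qᵀ) =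
            (Qᵀ * Q) * (Matrix.diagonal lam * Qᵀ) from by noncomm_ring, hQ', Matrix.one_mul]
        calc (Matrix.diagonal lam).mulVec u1
            = (Matrix.diagonal lam * Qᵀ).mulVec (fun _ => 1) := by
              rw [hu1, Matrix.mulVec_mulVec]
          _ = (Qᵀ * L).mulVec (fun _ => 1) := by rw [e1]
          _ = Qᵀ.mulVec (L.mulVec (fun _ => 1)) := (Matrix.mulVec_mulVec _ _ _).symm
          _ = 0 := by rw [hL1, Matrix.mulVec_zero]
      intro s
      have := congrFun e s
      rwa [Matrix.mulVec_diagonal] at this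
    obtain ⟨j0, hj0⟩ : ∃ j0, u1 j0 ≠ 0 := by
      by_contra hcon
      push_neg at hcon
      have hu1z : u1 = 0 := funext hcon
      have : (fun _ : Fin n => (1:ℝ)) = 0 := by
        calc (fun _ : Fin n => (1:ℝ)) = (Q * Qᵀ).mulVec (fun _ => 1) := by
              rw [hQ, Matrix.one_mulVec]
          _ = Q.mulVec u1 := (Matrix.mulVec_mulVec _ _ _).symm
          _ = 0 := by rw [hu1z, Matrix.mulVec_zero]
      exact one_ne_zero (congrFun this i)
    have hlamj0 : lam j0 = 0 :=
      (mul_eq_zero.mp (hDu1 j0)).resolve_right hj0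
    have hlamne : ∀ l, l ≠ j0 → lam l ≠ 0 := by
      intro l hl hz
      exact hl (hdistinct (hz.trans hlamj0.symm))
    set y : Fin n → ℝ := Qᵀ.mulVec x with hy
    set a : ℝ := y j0 / u1 j0 with ha
    have hyu : y = a • u1 := by
      funext l
      by_cases hl : l = j0
      · subst hl
        rw [ha, Pi.smul_apply, smul_eq_mul, div_mul_cancel₀ _ hj0]
      · have h1 : y l = 0 := (mul_eq_zero.mp (hQx l)).resolve_left (hlamne l hl)
        have h2 : u1 l = 0 := (mul_eq_zero.mp (hDu1 l)).resolve_left (hlamne l hl)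
        rw [h1, Pi.smul_apply, h2, smul_eq_mul, mul_zero]
    have hxa : x = a • (fun _ : Fin n => (1:ℝ)) := by
      calc x = (Q * Qᵀ).mulVec x := by rw [hQ, Matrix.one_mulVec]
        _ = Q.mulVec y := (Matrix.mulVec_mulVec _ _ _).symm
        _ = Q.mulVec (a • u1) := by rw [hyu]
        _ = a • Q.mulVec u1 := Matrix.mulVec_smul _ _ _
        _ = a • (Q * Qᵀ).mulVec (fun _ => 1) := by rw [hu1, Matrix.mulVec_mulVec]
        _ = a • (fun _ : Fin n => (1:ℝ)) := by rw [hQ, Matrix.one_mulVec]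
    refine ⟨a, ?_⟩
    funext j
    cases j with
    | inl t =>
        have : w (Sum.inl t) = x t := rfl
        rw [this, hxa]
        simp
    | inr t =>
        have : w (Sum.inr t) = v t := rfl
        rw [this, hv]
        simp
  · -- backward direction
    rintro ⟨a, rfl⟩
    intro k hk
    have he : A.mulVec (Sum.elim (fun _ => (1:ℝ)) (fun _ => 0)) = 0 := by
      rw [hA, Matrix.fromBlocks_mulVec]
      have h1 : (Sum.elim (fun _ => (1:ℝ)) (fun _ => 0) : Fin n ⊕ Fin n → ℝ) ∘ Sum.inl =
          fun _ : Fin n => (1:ℝ) := rfl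
      have h2 : (Sum.elim (fun _ => (1:ℝ)) (fun _ => 0) : Fin n ⊕ Fin n → ℝ) ∘ Sum.inr =
          fun _ : Fin n => (0:ℝ) := rfl
      rw [h1, h2]
      funext j
      cases j with
      | inl t => simp [Matrix.mulVec_zero]
      | inr t =>
          simp only [Sum.elim_inr, Pi.add_apply]
          have h3 : (-L).mulVec (fun _ => (1:ℝ)) = 0 := by
            rw [Matrix.neg_mulVec, hL1, neg_zero]
          rw [h3, show (fun _ : Fin n => (0:ℝ)) = 0 from rfl, Matrix.mulVec_zero]
          simp
    have hCe : ∀ u : Fin n ⊕ Fin n → ℝ, (∀ t, u (Sum.inr t) = 0) → C.mulVec u = 0 := by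
      intro u hu
      funext r
      simp only [Matrix.mulVec, dotProduct, hC, Pi.zero_apply]
      apply Finset.sum_eq_zero
      intro b _
      split
      · next hb => rw [hb, hu, mul_zero]
      · exact zero_mul _
    rw [Matrix.mulVec_smul]
    cases k with
    | zero =>
        rw [pow_zero, Matrix.one_mulVec]
        rw [show C.mulVec (a • Sum.elim (fun _ => (1:ℝ)) (fun _ => 0)) =
          a • C.mulVec (Sum.elim (fun _ => (1:ℝ)) (fun _ => 0)) from Matrix.mulVec_smul _ _ _]
        rw [hCe _ (fun t => rfl), smul_zero]
    | succ k =>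
        rw [pow_succ, ← Matrix.mulVec_mulVec, he, Matrix.mulVec_zero, smul_zero, Matrix.mulVec_zero]
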